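/- Let D_x > 0, y ∈ R^d with ‖y‖₂ ≤ 1, and x ∈ R^d with ‖x‖₂ ≤ D_x. Define P(y) = (y, √(1-‖y‖₂²), 0) ∈ R^{d+2} and Q(x) = (0.8·x/D_x, 0, √(1 - 0.64‖x‖₂²/D_x²)) ∈ R^{d+2}. Then ‖P(y)‖₂ = ‖Q(x)‖₂ = 1, ⟨Q(x), P(y)⟩ = 0.8⟨x,y⟩/D_x ≤ 0.8, and for any finite set Y of vectors of norm at most 1, argmax_{y∈Y}⟨Q(x),P(y)⟩ = argmax_{y∈Y}⟨x,y⟩. -/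

import Mathlib

open RealInnerProductSpace

noncomputable def Ptrans {d : ℕ} (y : EuclideanSpace ℝ (Fin d)) :
    EuclideanSpace ℝ (Fin d ⊕ Fin 2) :=
  WithLp.toLp 2 (Sum.elim y ![Real.sqrt (1 - ‖y‖ ^ 2), 0])

noncomputable def Qtrans {d : ℕ} (Dx : ℝ) (x : EuclideanSpace ℝ (Fin d)) :
    EuclideanSpace ℝ (Fin d ⊕ Fin 2) :=
  WithLp.toLp 2 (Sum.elim (fun i => 0.8 * x i / Dx) ![0, Real.sqrt (1 - 0.64 * ‖x‖ ^ 2 / Dx ^ 2)])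

lemma inner_QP {d : ℕ} (Dx : ℝ) (x y : EuclideanSpace ℝ (Fin d)) :
    ⟪Qtrans Dx x, Ptrans y⟫ = 0.8 * ⟪x, y⟫ / Dx := by
  simp only [PiLp.inner_apply, Fintype.sum_sum_type, Qtrans, Ptrans, PiLp.toLp_apply, Sum.elim_inl,
    Sum.elim_inr, RCLike.inner_apply, conj_trivial, Fin.sum_univ_two,
    Matrix.cons_val_zero, Matrix.cons_val_one, Matrix.head_cons]
  rw [mul_zero, zero_mul, add_zero, add_zero, Finset.mul_sum, Finset.sum_div]
  exact Finset.sum_congr rfl fun i _ => by ring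

theorem stmt_13 {d : ℕ} (Dx : ℝ) (hDx : 0 < Dx)
    (y x : EuclideanSpace ℝ (Fin d)) (hy : ‖y‖ ≤ 1) (hx : ‖x‖ ≤ Dx) :
    ‖Ptrans y‖ = 1 ∧ ‖Qtrans Dx x‖ = 1 ∧
    ⟪Qtrans Dx x, Ptrans y⟫ = 0.8 * ⟪x, y⟫ / Dx ∧
    ⟪Qtrans Dx x, Ptrans y⟫ ≤ 0.8 ∧
    ∀ Y : Finset (EuclideanSpace ℝ (Fin d)), (∀ y' ∈ Y, ‖y'‖ ≤ 1) →
      ∀ z ∈ Y, ((∀ y' ∈ Y, ⟪Qtrans Dx x, Ptrans y'⟫ ≤ ⟪Qtrans Dx x, Ptrans z⟫) ↔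
        (∀ y' ∈ Y, ⟪x, y'⟫ ≤ ⟪x, z⟫)) := by
  have hny : ‖y‖ ^ 2 = ∑ i, y i ^ 2 := by
    rw [EuclideanSpace.norm_eq, Real.sq_sqrt (Finset.sum_nonneg fun i _ => sq_nonneg _)]
    simp [sq_abs]
  have hnx : ‖x‖ ^ 2 = ∑ i, x i ^ 2 := by
    rw [EuclideanSpace.norm_eq, Real.sq_sqrt (Finset.sum_nonneg fun i _ => sq_nonneg _)]
    simp [sq_abs]
  have hy2 : (0:ℝ) ≤ 1 - ‖y‖ ^ 2 := by nlinarith [norm_nonneg y]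
  have hx2 : (0:ℝ) ≤ 1 - 0.64 * ‖x‖ ^ 2 / Dx ^ 2 := by
    have : ‖x‖ ^ 2 ≤ Dx ^ 2 := by nlinarith [norm_nonneg x]
    have h2 : (0:ℝ) < Dx ^ 2 := by positivity
    rw [sub_nonneg, div_le_one h2]; nlinarith
  have hP : ‖Ptrans y‖ = 1 := by
    rw [EuclideanSpace.norm_eq]
    rw [show (1:ℝ) = Real.sqrt 1 from (Real.sqrt_one).symm]
    congr 1
    simp only [Fintype.sum_sum_type, Ptrans, PiLp.toLp_apply, Sum.elim_inl, Sum.elim_inr, Fin.sum_univ_two,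
      Matrix.cons_val_zero, Matrix.cons_val_one, Matrix.head_cons, Real.norm_eq_abs, sq_abs, norm_zero]
    rw [Real.sq_sqrt hy2]
    rw [← hny]; ring
  have hQ : ‖Qtrans Dx x‖ = 1 := by
    rw [EuclideanSpace.norm_eq]
    rw [show (1:ℝ) = Real.sqrt 1 from (Real.sqrt_one).symm]
    congr 1
    simp only [Fintype.sum_sum_type, Qtrans, PiLp.toLp_apply, Sum.elim_inl, Sum.elim_inr, Fin.sum_univ_two,
      Matrix.cons_val_zero, Matrix.cons_val_one, Matrix.head_cons, Real.norm_eq_abs, sq_abs, norm_zero]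
    rw [Real.sq_sqrt hx2]
    have : ∑ i, (0.8 * x i / Dx) ^ 2 = 0.64 * (∑ i, x i ^ 2) / Dx ^ 2 := by
      rw [Finset.mul_sum, Finset.sum_div]
      exact Finset.sum_congr rfl fun i _ => by field_simp; ring
    rw [this, ← hnx]; ring
  refine ⟨hP, hQ, inner_QP Dx x y, ?_, ?_⟩
  · rw [inner_QP]
    have hin : ⟪x, y⟫ ≤ Dx := by
      calc ⟪x, y⟫ ≤ ‖x‖ * ‖y‖ := real_inner_le_norm x y
        _ ≤ Dx * 1 := mul_le_mul hx hy (norm_nonneg y) hDx.le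
        _ = Dx := mul_one Dx
    rw [div_le_iff₀ hDx]; nlinarith
  · intro Y _ z _
    constructor
    · intro h y' hy'
      have := h y' hy'
      rw [inner_QP, inner_QP, div_le_div_iff₀ hDx hDx] at this
      nlinarith
    · intro h y' hy'
      rw [inner_QP, inner_QP, div_le_div_iff₀ hDx hDx]
      nlinarith [h y' hy']
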